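/- Let μ be a probability measure on (0,∞) (the law of the exit price P_t) such that ∫ x dμ(x) < ∞, and let 0 < ℙ_l ≤ ℙ_u. Then ∫ UIL^R(x) dμ(x) = −(1/2)·∫_{ℙ_l}^{ℙ_u} K^(−3/2)·C(K) dK, where UIL^R(x) = 2(√x − √(ℙ_l))⁺ − 2(√x − √(ℙ_u))⁺ − (1/√(ℙ_l))(x − ℙ_l)⁺ + (1/√(ℙ_u))(x − ℙ_u)⁺ and C(K) = ∫ (x − K)⁺ dμ(x). -/

import Mathlib

open MeasureTheory

lemma hasDerivAt_mul_max (t : ℝ) :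
    HasDerivAt (fun s : ℝ => s * max s 0) (2 * max t 0) t := by
  rcases lt_trichotomy t 0 with ht | ht | ht
  · have h0 : (2 : ℝ) * max t 0 = 0 := by rw [max_eq_right ht.le]; ring
    rw [h0]
    apply (hasDerivAt_const t (0 : ℝ)).congr_of_eventuallyEq
    filter_upwards [eventually_lt_nhds ht] with s hs
    rw [max_eq_right hs.le, mul_zero]
  · subst ht
    rw [max_self, mul_zero]
    rw [hasDerivAt_iff_isLittleO]
    rw [Asymptotics.isLittleO_iff]
    intro c hc
    filter_upwards [Metric.ball_mem_nhds 0 hc] with s hs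
    simp only [Real.dist_eq, sub_zero, Metric.mem_ball] at hs ⊢
    have hb : |max s 0| ≤ |s| := by
      rcases le_or_gt s 0 with h | h
      · rw [max_eq_right h]; simp [abs_nonneg]
      · rw [max_eq_left h.le]
    simp only [smul_eq_mul, mul_zero, sub_zero, Real.norm_eq_abs, max_self]
    calc |s * max s 0| = |s| * |max s 0| := abs_mul _ _
      _ ≤ |s| * |s| := by gcongr
      _ ≤ c * |s| := by gcongr
  · have h0 : (2 : ℝ) * max t 0 = 1 * t + t * 1 := by rw [max_eq_left ht.le]; ring
    rw [h0]
    apply ((hasDerivAt_id t).mul (hasDerivAt_id t)).congr_of_eventuallyEq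
    filter_upwards [eventually_gt_nhds ht] with s hs
    simp [max_eq_left hs.le]

lemma rpow_nth {K : ℝ} (hK : 0 < K) : K ^ (-(3:ℝ)/2) = (K * Real.sqrt K)⁻¹ := by
  rw [show (-(3:ℝ)/2) = -((1:ℝ) + 1/2) by norm_num, Real.rpow_neg hK.le,
    Real.rpow_add hK, Real.rpow_one, ← Real.sqrt_eq_rpow]

lemma hasDerivAt_F (x : ℝ) (hx : 0 < x) {K : ℝ} (hK : 0 < K) :
    HasDerivAt (fun K => 2 * max (Real.sqrt x - Real.sqrt K) 0
        - (1 / Real.sqrt K) * max (x - K) 0)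
      ((1/2) * K ^ (-(3:ℝ)/2) * max (x - K) 0) K := by
  have hsK : 0 < Real.sqrt K := Real.sqrt_pos.mpr hK
  have hs : HasDerivAt Real.sqrt (1/(2*Real.sqrt K)) K := Real.hasDerivAt_sqrt hK.ne'
  have hσ : HasDerivAt (fun K => Real.sqrt x - Real.sqrt K) (-(1/(2*Real.sqrt K))) K := by
    simpa using (hasDerivAt_const K (Real.sqrt x)).fun_sub hs
  have hq : HasDerivAt (fun K => (Real.sqrt x - Real.sqrt K) * max (Real.sqrt x - Real.sqrt K) 0)
      ((2 * max (Real.sqrt x - Real.sqrt K) 0) * (-(1/(2*Real.sqrt K)))) K :=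
    by have := (hasDerivAt_mul_max (Real.sqrt x - Real.sqrt K)).comp K hσ; exact this
  have hinv : HasDerivAt (fun K => (Real.sqrt K)⁻¹)
      (-(1/(2*Real.sqrt K)) / (Real.sqrt K)^2) K := hs.inv hsK.ne'
  have hG := (hinv.fun_mul hq).fun_neg
  have ha : Real.sqrt x ^ 2 = x := Real.sq_sqrt hx.le
  have hb : Real.sqrt K ^ 2 = K := Real.sq_sqrt hK.le
  have hval : -((-(1/(2*Real.sqrt K)) / (Real.sqrt K)^2) *
        ((Real.sqrt x - Real.sqrt K) * max (Real.sqrt x - Real.sqrt K) 0)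
      + (Real.sqrt K)⁻¹ * ((2 * max (Real.sqrt x - Real.sqrt K) 0) * (-(1/(2*Real.sqrt K)))))
      = (1/2) * K ^ (-(3:ℝ)/2) * max (x - K) 0 := by
    rw [rpow_nth hK]
    rcases le_or_gt x K with h | h
    · have h1 : Real.sqrt x - Real.sqrt K ≤ 0 := sub_nonpos.mpr (Real.sqrt_le_sqrt h)
      rw [max_eq_right h1, max_eq_right (sub_nonpos.mpr h)]
      ring
    · have h1 : Real.sqrt K < Real.sqrt x := Real.sqrt_lt_sqrt hK.le h
      rw [max_eq_left (sub_nonneg.mpr h1.le), max_eq_left (sub_nonneg.mpr h.le)]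
      field_simp
      linear_combination (-x) * hb + K * ha
  rw [← hval]
  apply hG.congr_of_eventuallyEq
  filter_upwards [eventually_gt_nhds hK] with k hk
  have hsk : 0 < Real.sqrt k := Real.sqrt_pos.mpr hk
  rcases le_or_gt x k with h | h
  · have h1 : Real.sqrt x - Real.sqrt k ≤ 0 := sub_nonpos.mpr (Real.sqrt_le_sqrt h)
    rw [max_eq_right h1, max_eq_right (sub_nonpos.mpr h)]
    ring
  · have h1 : Real.sqrt k < Real.sqrt x := Real.sqrt_lt_sqrt hk.le h
    rw [max_eq_left (sub_nonneg.mpr h1.le), max_eq_left (sub_nonneg.mpr h.le)]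
    field_simp
    linear_combination Real.sq_sqrt hx.le - Real.sq_sqrt hk.le

lemma pathwise (x : ℝ) (hx : 0 < x) {Pl Pu : ℝ} (hPl : 0 < Pl) (hlu : Pl ≤ Pu) :
    2 * max (Real.sqrt x - Real.sqrt Pl) 0 - 2 * max (Real.sqrt x - Real.sqrt Pu) 0
      - (1 / Real.sqrt Pl) * max (x - Pl) 0 + (1 / Real.sqrt Pu) * max (x - Pu) 0
    = -(1/2) * ∫ K in Pl..Pu, K ^ (-(3:ℝ)/2) * max (x - K) 0 := by
  have hcont : ContinuousOn (fun K : ℝ => K ^ (-(3:ℝ)/2) * max (x - K) 0) (Set.uIcc Pl Pu) := by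
    rw [Set.uIcc_of_le hlu]
    intro K hK
    have hK0 : 0 < K := lt_of_lt_of_le hPl hK.1
    exact ((Real.continuousAt_rpow_const K _ (Or.inl hK0.ne')).continuousWithinAt).mul
      (((continuous_const.sub continuous_id).max continuous_const).continuousWithinAt)
  have hint : IntervalIntegrable (fun K : ℝ => K ^ (-(3:ℝ)/2) * max (x - K) 0) volume Pl Pu :=
    hcont.intervalIntegrable
  have hftc := intervalIntegral.integral_eq_sub_of_hasDerivAt
    (f := fun K => 2 * max (Real.sqrt x - Real.sqrt K) 0 - (1 / Real.sqrt K) * max (x - K) 0)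
    (f' := fun K => (1/2) * K ^ (-(3:ℝ)/2) * max (x - K) 0)
    (fun K hK => by
      rw [Set.uIcc_of_le hlu] at hK
      exact hasDerivAt_F x hx (lt_of_lt_of_le hPl hK.1))
    (by simpa [mul_assoc] using hint.const_mul (1/2 : ℝ))
  have h2 : (∫ K in Pl..Pu, (1/2 : ℝ) * K ^ (-(3:ℝ)/2) * max (x - K) 0)
      = (1/2 : ℝ) * ∫ K in Pl..Pu, K ^ (-(3:ℝ)/2) * max (x - K) 0 := by
    simp_rw [mul_assoc]
    exact intervalIntegral.integral_const_mul _ _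
  rw [h2] at hftc
  linarith [hftc]

theorem expected_UILR_static_replication
    (μ : Measure ℝ) [IsProbabilityMeasure μ]
    (hsupp : μ (Set.Iic 0) = 0)
    (hmom : Integrable (fun x => x) μ)
    (Pl Pu : ℝ) (hPl : 0 < Pl) (hlu : Pl ≤ Pu) :
    (∫ x, (2 * max (Real.sqrt x - Real.sqrt Pl) 0
        - 2 * max (Real.sqrt x - Real.sqrt Pu) 0
        - (1 / Real.sqrt Pl) * max (x - Pl) 0
        + (1 / Real.sqrt Pu) * max (x - Pu) 0) ∂μ)
    = -(1 / 2) * ∫ K in Pl..Pu, K ^ (-(3 : ℝ) / 2) * (∫ x, max (x - K) 0 ∂μ) := by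
  have hxpos : ∀ᵐ x ∂μ, 0 < x := by
    rw [ae_iff]
    convert hsupp using 2
    ext y
    simp [not_lt]
  set ν := volume.restrict (Set.Ioc Pl Pu) with hν
  haveI hνfin : IsFiniteMeasure ν := by
    constructor
    rw [hν, Measure.restrict_apply_univ]
    exact measure_Ioc_lt_top
  have step1 : (∫ x, (2 * max (Real.sqrt x - Real.sqrt Pl) 0
        - 2 * max (Real.sqrt x - Real.sqrt Pu) 0
        - (1 / Real.sqrt Pl) * max (x - Pl) 0
        + (1 / Real.sqrt Pu) * max (x - Pu) 0) ∂μ)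
      = ∫ x, (-(1/2) * ∫ K in Pl..Pu, K ^ (-(3:ℝ)/2) * max (x - K) 0) ∂μ := by
    have hae : (fun x => (2 * max (Real.sqrt x - Real.sqrt Pl) 0
        - 2 * max (Real.sqrt x - Real.sqrt Pu) 0
        - (1 / Real.sqrt Pl) * max (x - Pl) 0
        + (1 / Real.sqrt Pu) * max (x - Pu) 0))
        =ᵐ[μ] (fun x => -(1/2) * ∫ K in Pl..Pu, K ^ (-(3:ℝ)/2) * max (x - K) 0) := by
      filter_upwards [hxpos] with x hx
      exact pathwise x hx hPl hlu
    exact integral_congr_ae hae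
  rw [step1, integral_const_mul]
  congr 1
  -- convert interval integrals to ν-integrals
  rw [intervalIntegral.integral_of_le hlu]
  have hiff : ∀ x : ℝ, (∫ K in Pl..Pu, K ^ (-(3:ℝ)/2) * max (x - K) 0)
      = ∫ K, K ^ (-(3:ℝ)/2) * max (x - K) 0 ∂ν := fun x =>
    intervalIntegral.integral_of_le hlu
  simp_rw [hiff]
  have hInt : Integrable (Function.uncurry fun x K => K ^ (-(3 : ℝ)/2) * max (x - K) 0)
      (μ.prod ν) := by
    have hmeasf : Measurable fun p : ℝ × ℝ => p.2 ^ (-(3:ℝ)/2) * max (p.1 - p.2) 0 := by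
      fun_prop
    refine Integrable.mono' (g := fun p : ℝ × ℝ => Pl ^ (-(3:ℝ)/2) * p.1) ?_ ?_ ?_
    · apply Integrable.const_mul
      refine (integrable_prod_iff measurable_fst.aestronglyMeasurable).mpr ⟨?_, ?_⟩
      · exact Filter.Eventually.of_forall fun x => integrable_const _
      · simp only [norm_norm, integral_const, smul_eq_mul]
        exact hmom.norm.const_mul _
    · exact hmeasf.aestronglyMeasurable
    · have hmset : MeasurableSet {p : ℝ × ℝ |
          ‖p.2 ^ (-(3:ℝ)/2) * max (p.1 - p.2) 0‖ ≤ Pl ^ (-(3:ℝ)/2) * p.1} :=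
        measurableSet_le hmeasf.norm (by fun_prop)
      rw [Function.uncurry_def]
      refine (Measure.ae_prod_iff_ae_ae hmset).mpr ?_
      filter_upwards [hxpos] with x hx
      have hK : ∀ᵐ K ∂ν, K ∈ Set.Ioc Pl Pu := ae_restrict_mem measurableSet_Ioc
      filter_upwards [hK] with K hKm
      have hK0 : 0 < K := lt_trans hPl hKm.1
      have h1 : K ^ (-(3:ℝ)/2) ≤ Pl ^ (-(3:ℝ)/2) := by
        apply Real.rpow_le_rpow_of_nonpos hPl hKm.1.le
        norm_num
      have h2 : max (x - K) 0 ≤ x := max_le (by linarith) hx.le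
      rw [Real.norm_eq_abs, abs_mul, abs_of_nonneg (Real.rpow_nonneg hK0.le _),
        abs_of_nonneg (le_max_right _ _)]
      exact mul_le_mul h1 h2 (le_max_right _ _) (Real.rpow_nonneg hPl.le _)
  rw [integral_integral_swap hInt]
  apply integral_congr_ae
  apply Filter.Eventually.of_forall
  intro K
  exact integral_const_mul _ _
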